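/- Let a1, a2, a3 be integers with a3 ≠ 0, and let p be a prime with p > |3*a1| and p > |3*a3|. Then there do not exist integers x, y, z with x+y+z = a1, xy+yz+zx = a2, and xyz = p*a3. -/
import Mathlib

lemma aux_stmt_10 (a1 a3 : ℤ) (ha3 : a3 ≠ 0) (p : ℕ) (hp : p.Prime)
    (h1 : (p : ℤ) > |3 * a1|) (h3 : (p : ℤ) > |3 * a3|)
    (x y z : ℤ) (hs : x + y + z = a1) (hm : x * y * z = (p : ℤ) * a3)
    (hd : (p : ℤ) ∣ x) : False := by
  obtain ⟨k, hk⟩ := hd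
  have hp0 : (0 : ℤ) < p := by exact_mod_cast hp.pos
  have hx : x ≠ 0 := by
    rintro rfl
    simp at hm
    rcases hm with h | h
    · omega
    · exact ha3 h
  have hk0 : k ≠ 0 := by rintro rfl; simp at hk; exact hx hk
  have hy : y ≠ 0 := by rintro rfl; simp at hm; rcases hm with h | h; omega; exact ha3 h
  have hz : z ≠ 0 := by rintro rfl; simp at hm; rcases hm with h | h; omega; exact ha3 h
  have hkyz : k * y * z = a3 := by
    have : (p : ℤ) * (k * y * z) = (p : ℤ) * a3 := by rw [← hm, hk]; ring
    exact mul_left_cancel₀ (by positivity) this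
  have hk1 : 1 ≤ |k| := Int.one_le_abs (by exact sub_ne_zero.mp (by simpa using hk0))
  have hy1 : 1 ≤ |y| := Int.one_le_abs hy
  have hz1 : 1 ≤ |z| := Int.one_le_abs hz
  have hyz : |y| * |z| ≤ |a3| := by
    rw [← hkyz]
    rw [abs_mul, abs_mul]
    nlinarith [mul_nonneg (abs_nonneg y) (abs_nonneg z), mul_le_mul_of_nonneg_right hk1 (mul_nonneg (abs_nonneg y) (abs_nonneg z))]
  have hsum : |y| + |z| ≤ |a3| + 1 := by nlinarith
  have hxge : (p : ℤ) ≤ |x| := by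
    rw [hk, abs_mul, abs_of_pos hp0]
    nlinarith
  have hxle : |x| ≤ |a1| + |y| + |z| := by
    have : x = a1 - y - z := by linarith
    rw [this]
    calc |a1 - y - z| ≤ |a1 - y| + |z| := by
            simpa using abs_sub (a1 - y) z
      _ ≤ |a1| + |y| + |z| := by
            have := abs_sub a1 y
            linarith
  have ha1 : 3 * |a1| < p := by rw [abs_mul] at h1; simp at h1; linarith [h1]
  have ha3' : 3 * |a3| < p := by rw [abs_mul] at h3; simp at h3; linarith [h3]
  have ha3abs : 1 ≤ |a3| := Int.one_le_abs ha3
  linarith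

theorem stmt_10 (a1 a2 a3 : ℤ) (ha3 : a3 ≠ 0) (p : ℕ) (hp : p.Prime)
    (h1 : (p : ℤ) > |3 * a1|) (h3 : (p : ℤ) > |3 * a3|) :
    ¬ ∃ x y z : ℤ, x + y + z = a1 ∧ x * y + y * z + z * x = a2 ∧ x * y * z = p * a3 := by
  rintro ⟨x, y, z, hs, -, hm⟩
  have hpz : Prime (p : ℤ) := Nat.prime_iff_prime_int.mp hp
  have hdvd : (p : ℤ) ∣ x * y * z := ⟨a3, hm⟩
  rcases (hpz.dvd_mul.mp hdvd) with h | h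
  · rcases hpz.dvd_mul.mp h with h | h
    · exact aux_stmt_10 a1 a3 ha3 p hp h1 h3 x y z hs hm h
    · exact aux_stmt_10 a1 a3 ha3 p hp h1 h3 y x z (by linarith) (by rw [← hm]; ring) h
  · exact aux_stmt_10 a1 a3 ha3 p hp h1 h3 z x y (by linarith) (by rw [← hm]; ring) h
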